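/- Let $g(z_1,\dots,z_{n-1}) = \prod (1 + e_1 z_1 + \cdots + e_{n-1} z_{n-1})$, the product over all sign vectors $(e_i) \in \{1,-1\}^{n-1}$ except the all-minus vector $(-1,\dots,-1)$. Then the coefficient of $z_1 z_2 \cdots z_{n-1}$ in $g$ is $\pm(n-1)!$. -/

import Mathlib

set_option maxHeartbeats 1000000

open MvPolynomial Finset

namespace CoeffSq

variable {ι : Type*} [Fintype ι] [DecidableEq ι]

noncomputable def P (s : ι → Bool) : MvPolynomial ι ℤ :=
  1 + ∑ i, (if s i then 1 else -1) * X i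

noncomputable def Ffull (ι : Type*) [Fintype ι] [DecidableEq ι] : MvPolynomial ι ℤ :=
  ∏ s : ι → Bool, P s

lemma coeff_aeval_sign (i₀ : ι) (p : MvPolynomial ι ℤ) (d : ι →₀ ℕ) :
    coeff d (aeval (fun j => if j = i₀ then -X j else X j) p)
      = (-1) ^ (d i₀) * coeff d p := by
  induction p using MvPolynomial.induction_on generalizing d with
  | C a =>
      have h1 : (aeval (fun j => if j = i₀ then -X j else (X j : MvPolynomial ι ℤ))) (C a)
          = C a := by simp
      rw [h1, coeff_C]
      split_ifs with h
      · subst h; simp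
      · simp
  | add p q hp hq => simp only [map_add, coeff_add, hp, hq]; ring
  | mul_X p j hp =>
      rw [map_mul, aeval_X]
      by_cases hj : j = i₀
      · subst hj
        rw [if_pos rfl, mul_neg, coeff_neg, coeff_mul_X', coeff_mul_X']
        split_ifs with h
        · rw [hp]
          have hd : d j ≠ 0 := by simpa [Finsupp.mem_support_iff] using h
          obtain ⟨k, hk⟩ := Nat.exists_eq_succ_of_ne_zero hd
          have hji : ((d - Finsupp.single j 1 : ι →₀ ℕ)) j = k := by
            rw [Finsupp.tsub_apply, Finsupp.single_apply, if_pos rfl, hk]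
            rfl
          rw [hji, hk, pow_succ]
          ring
        · simp
      · simp only [if_neg hj]
        rw [coeff_mul_X', coeff_mul_X']
        split_ifs with h
        · rw [hp]
          have hji : ((d - Finsupp.single j 1 : ι →₀ ℕ)) i₀ = d i₀ := by
            rw [Finsupp.tsub_apply, Finsupp.single_apply, if_neg hj]
            simp
          rw [hji]
        · rw [mul_zero]

lemma aeval_P (i₀ : ι) (s : ι → Bool) :
    aeval (fun j => if j = i₀ then -X j else X j) (P s)
      = P (fun j => if j = i₀ then !s j else s j) := by
  unfold P
  rw [map_add, map_one, map_sum]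
  congr 1
  apply Finset.sum_congr rfl
  intro j _
  rw [map_mul, aeval_X]
  by_cases hj : j = i₀
  · subst hj
    cases hsj : s j <;> simp [hsj]
  · cases hsj : s j <;> simp [hj, hsj]

lemma aeval_F (i₀ : ι) :
    aeval (fun j => if j = i₀ then -X j else X j) (Ffull ι) = Ffull ι := by
  unfold Ffull
  rw [map_prod]
  have hinv : Function.Involutive (fun (s : ι → Bool) => fun j => if j = i₀ then !s j else s j) := by
    intro s; funext j; by_cases hj : j = i₀ <;> simp [hj]
  exact Fintype.prod_bijective _ hinv.bijective _ _ (fun s => aeval_P i₀ s)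

lemma coeff_F_eq_zero {d : ι →₀ ℕ} {i₀ : ι} (h : d i₀ = 1) :
    coeff d (Ffull ι) = 0 := by
  have h2 := coeff_aeval_sign i₀ (Ffull ι) d
  rw [aeval_F, h, pow_one] at h2
  linarith

lemma P_false : P (fun _ : ι => false) = 1 - ∑ i : ι, X i := by
  unfold P
  simp [sub_eq_add_neg, Finset.sum_neg_distrib]

lemma F_eq : Ffull ι
    = (∏ s ∈ univ.filter (fun s : ι → Bool => s ≠ fun _ => false), P s)
      * P (fun _ => false) := by
  rw [Finset.filter_ne', Finset.prod_erase_mul _ _ (Finset.mem_univ _)]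
  rfl

lemma dT_apply (T : Finset ι) (i : ι) :
    (∑ j ∈ T, Finsupp.single j (1 : ℕ)) i = if i ∈ T then 1 else 0 := by
  rw [Finsupp.finset_sum_apply]
  simp [Finsupp.single_apply]

lemma coeff_g (T : Finset ι) :
    coeff (∑ j ∈ T, Finsupp.single j 1)
      (∏ s ∈ univ.filter (fun s : ι → Bool => s ≠ fun _ => false), P s)
      = ((T.card).factorial : ℤ) := by
  induction T using Finset.strongInduction with
  | _ T ih =>
    set g := ∏ s ∈ univ.filter (fun s : ι → Bool => s ≠ fun _ => false), P s with hgdef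
    by_cases hT : T = ∅
    · subst hT
      simp only [Finset.sum_empty, Finset.card_empty, Nat.factorial_zero, Nat.cast_one]
      have h0 : coeff (0 : ι →₀ ℕ) g = constantCoeff g := rfl
      rw [h0, hgdef, map_prod, Finset.prod_eq_one]
      intro s _
      simp [P, apply_ite]
    · obtain ⟨i₀, hi₀⟩ := Finset.nonempty_iff_ne_empty.mpr hT
      set d : ι →₀ ℕ := ∑ j ∈ T, Finsupp.single j 1 with hd
      have hgF : g = Ffull ι + g * (∑ i : ι, X i) := by
        have h1 : Ffull ι = g * (1 - ∑ i : ι, X i) := by rw [F_eq, P_false]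
        rw [h1]; ring
      have hdi₀ : d i₀ = 1 := by rw [hd, dT_apply, if_pos hi₀]
      rw [hgF, coeff_add, coeff_F_eq_zero hdi₀, zero_add, Finset.mul_sum,
        MvPolynomial.coeff_sum]
      have hsupp : d.support = T := by
        ext i
        simp [Finsupp.mem_support_iff, hd, dT_apply]
      have hterm : ∀ i ∈ (univ : Finset ι), coeff d (g * X i)
          = if i ∈ T then coeff (d - Finsupp.single i 1) g else 0 := by
        intro i _
        rw [coeff_mul_X', hsupp]
      rw [Finset.sum_congr rfl hterm]
      rw [Finset.sum_ite_mem, Finset.univ_inter]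
      have hsub : ∀ i ∈ T, coeff (d - Finsupp.single i 1) g = (((T.erase i).card).factorial : ℤ) := by
        intro i hi
        have hde : d - Finsupp.single i 1 = ∑ j ∈ T.erase i, Finsupp.single j 1 := by
          rw [hd, ← Finset.add_sum_erase _ _ hi, add_tsub_cancel_left]
        rw [hde]
        exact ih (T.erase i) (Finset.erase_ssubset hi)
      rw [Finset.sum_congr rfl hsub]
      have hcard : ∀ i ∈ T, ((((T.erase i).card).factorial : ℤ)) = (((T.card - 1).factorial : ℤ)) := by
        intro i hi; rw [Finset.card_erase_of_mem hi]
      rw [Finset.sum_congr rfl hcard, Finset.sum_const, nsmul_eq_mul]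
      have hpos : 0 < T.card := Finset.card_pos.mpr ⟨i₀, hi₀⟩
      rw [← Nat.cast_mul, Nat.mul_factorial_pred hpos.ne']

end CoeffSq

open MvPolynomial in
/-- Let `g = ∏ (1 + ∑ eᵢ zᵢ)` over all sign vectors `(eᵢ) ∈ {1,-1}^(n-1)` except the
all-minus vector (`s i = true` encodes `eᵢ = +1`). Then the coefficient of the
squarefree monomial `z₁⋯z_{n-1}` in `g` is `±(n-1)!`. -/
theorem coeff_squarefree_product_except_all_minus (n : ℕ) (hn : 2 ≤ n) :
    MvPolynomial.coeff (Finsupp.equivFunOnFinite.symm fun _ : Fin (n - 1) => 1)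
      (∏ s ∈ Finset.univ.filter (fun s : Fin (n - 1) → Bool => s ≠ fun _ => false),
        ((1 + ∑ i, (if s i then 1 else -1) * MvPolynomial.X i) : MvPolynomial (Fin (n - 1)) ℤ))
      = (Nat.factorial (n - 1) : ℤ) ∨
    MvPolynomial.coeff (Finsupp.equivFunOnFinite.symm fun _ : Fin (n - 1) => 1)
      (∏ s ∈ Finset.univ.filter (fun s : Fin (n - 1) → Bool => s ≠ fun _ => false),
        ((1 + ∑ i, (if s i then 1 else -1) * MvPolynomial.X i) : MvPolynomial (Fin (n - 1)) ℤ))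
      = -(Nat.factorial (n - 1) : ℤ) := by
  left
  have h1 : (Finsupp.equivFunOnFinite.symm fun _ : Fin (n - 1) => 1)
      = ∑ j : Fin (n - 1), Finsupp.single j 1 := by
    ext i
    simp [CoeffSq.dT_apply]
  have h2 := CoeffSq.coeff_g (ι := Fin (n - 1)) Finset.univ
  simp only [CoeffSq.P] at h2
  rw [h1, h2, Finset.card_univ, Fintype.card_fin]
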